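/- Let v, x, y ∈ ℝ with x ≠ 0 and y ≠ 0, and let z = (z₁,z₂,z₃) ∈ ℝ³ with z₂ ≠ 0 and z₃ ≠ 0. Set e₁ = (0,0,1), f₁ = (1,0,0), f₂ = (1,0,0), f₂' = (0,1,0). Then D₁(E,F,G,L') = e^{−3v} · D₁(E,F,G,L), where G has line spanned by g₁ = z, L has line spanned by l₁ = (1,y,x), and L' has line spanned by l₁' = (1, e^{3v}·y, x). In particular, under the bulging deformation with parameter v, which moves the vertex (1,y,x) to (1,e^{3v}y,x), the first shear parameter σ₁ = log D₁ changes to σ₁ − 3v. -/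

import Mathlib

/-- The determinant of the 3×3 real matrix with columns `a`, `b`, `c`. -/
noncomputable def det3 (a b c : Fin 3 → ℝ) : ℝ :=
  Matrix.det (Matrix.transpose (Matrix.of ![a, b, c]))

/-- The first double ratio `D₁(E,F,G,L)` of a quadruple of flags whose lines are spanned
by `e₁, f₁, g₁, l₁` and where the plane of `F` is spanned by `f₂, f₂'`. -/
noncomputable def doubleRatio₁ (e₁ f₁ f₂ f₂' g₁ l₁ : Fin 3 → ℝ) : ℝ :=
  -(det3 e₁ f₁ g₁ / det3 e₁ f₁ l₁) * (det3 f₂ f₂' l₁ / det3 f₂ f₂' g₁)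

open Real in
/-- Under the bulging deformation with parameter `v`, which moves the vertex `(1,y,x)` to
`(1, e^{3v}·y, x)`, the first double ratio gets multiplied by `e^{−3v}`; hence the first
shear parameter `σ₁ = log D₁` changes to `σ₁ − 3v`. -/
theorem doubleRatio₁_bulging (v x y : ℝ) (hx : x ≠ 0) (hy : y ≠ 0)
    (z : Fin 3 → ℝ) (hz₂ : z 1 ≠ 0) (hz₃ : z 2 ≠ 0) :
    doubleRatio₁ ![0, 0, 1] ![1, 0, 0] ![1, 0, 0] ![0, 1, 0] z
        ![1, exp (3 * v) * y, x]
    = exp (-(3 * v)) * doubleRatio₁ ![0, 0, 1] ![1, 0, 0] ![1, 0, 0] ![0, 1, 0] z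
        ![1, y, x] := by
  have he : exp (3 * v) ≠ 0 := exp_ne_zero _
  simp only [doubleRatio₁, det3, Matrix.det_fin_three, Matrix.transpose_apply,
    Matrix.of_apply, Matrix.cons_val', Matrix.cons_val_zero, Matrix.cons_val_one,
    Matrix.head_cons, Matrix.cons_val_two, Matrix.tail_cons, Matrix.empty_val',
    Matrix.cons_val_fin_one, Matrix.head_fin_const]
  rw [Real.exp_neg]
  field_simp
  ring_nf
  field_simp
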